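/- Let Σ^{-1} be a symmetric positive-definite K×K matrix with nonnegative entries, β_{kj} > 0, d_j ≥ 0. Then the CTM MAP objective f(θ) = Σ_j d_j log(Σ_k θ_k β_{kj}) - ½ (log θ)ᵀ Σ^{-1} (log θ) is concave on the interior of the unit simplex Δ ⊂ ℝ^K, being the sum of the concave log-likelihood term and the concave prior term. -/

import Mathlib

open Finset Matrix

-- quadratic form as double sum
lemma quad_eq {K : ℕ} (A : Matrix (Fin K) (Fin K) ℝ) (x y : Fin K → ℝ) :
    x ⬝ᵥ A.mulVec y = ∑ i, ∑ j, A i j * x i * y j := by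
  simp [dotProduct, Matrix.mulVec, Finset.mul_sum]
  congr 1; ext i; congr 1; ext j; ring

-- monotonicity on nonpositive orthant
lemma quad_mono {K : ℕ} (A : Matrix (Fin K) (Fin K) ℝ) (hA : ∀ i j, 0 ≤ A i j)
    (u v : Fin K → ℝ) (huv : ∀ i, u i ≤ v i) (hv : ∀ i, v i ≤ 0) :
    v ⬝ᵥ A.mulVec v ≤ u ⬝ᵥ A.mulVec u := by
  rw [quad_eq, quad_eq]
  refine Finset.sum_le_sum fun i _ => Finset.sum_le_sum fun j _ => ?_
  have h1 : v i * v j ≤ u i * u j := by nlinarith [huv i, huv j, hv i, hv j]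
  nlinarith [hA i j, h1]

lemma quad_convex {K : ℕ} (A : Matrix (Fin K) (Fin K) ℝ) (hA : A.PosDef)
    (x y : Fin K → ℝ) {a b : ℝ} (ha : 0 ≤ a) (hb : 0 ≤ b) (hab : a + b = 1) :
    (a • x + b • y) ⬝ᵥ A.mulVec (a • x + b • y)
      ≤ a * (x ⬝ᵥ A.mulVec x) + b * (y ⬝ᵥ A.mulVec y) := by
  have hps := hA.posSemidef.dotProduct_mulVec_nonneg (x - y)
  rw [star_trivial] at hps
  have e1 : (x - y) ⬝ᵥ A.mulVec (x - y)
      = x ⬝ᵥ A.mulVec x - x ⬝ᵥ A.mulVec y - y ⬝ᵥ A.mulVec x + y ⬝ᵥ A.mulVec y := by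
    simp [Matrix.mulVec_sub, dotProduct_sub, sub_dotProduct]
    ring
  have e2 : (a • x + b • y) ⬝ᵥ A.mulVec (a • x + b • y)
      = a^2 * (x ⬝ᵥ A.mulVec x) + a*b*(x ⬝ᵥ A.mulVec y) + a*b*(y ⬝ᵥ A.mulVec x)
        + b^2 * (y ⬝ᵥ A.mulVec y) := by
    simp [Matrix.mulVec_add, Matrix.mulVec_smul, dotProduct_add, add_dotProduct,
      dotProduct_smul, smul_dotProduct, smul_eq_mul]
    ring
  have key : a * (x ⬝ᵥ A.mulVec x) + b * (y ⬝ᵥ A.mulVec y)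
      - ((a • x + b • y) ⬝ᵥ A.mulVec (a • x + b • y))
      = a * b * ((x - y) ⬝ᵥ A.mulVec (x - y)) := by
    rw [e1, e2]
    have hb' : b = 1 - a := by linarith
    subst hb'; ring
  nlinarith [mul_nonneg (mul_nonneg ha hb) hps, key]

lemma concaveOn_finset_sum {E : Type*} [AddCommMonoid E] [Module ℝ E] {s : Set E}
    (hs : Convex ℝ s) {ι : Type*} (t : Finset ι) (g : ι → E → ℝ)
    (h : ∀ i ∈ t, ConcaveOn ℝ s (g i)) :
    ConcaveOn ℝ s (fun x => ∑ i ∈ t, g i x) := by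
  induction t using Finset.cons_induction with
  | empty => simpa using concaveOn_const 0 hs
  | cons a t hat ih =>
      simp only [Finset.sum_cons]
      exact (h a (Finset.mem_cons_self a t)).add
        (ih fun i hi => h i (Finset.mem_cons_of_mem hi))

theorem ctm_objective_concave {K V : ℕ} (A : Matrix (Fin K) (Fin K) ℝ)
    (hA_pd : A.PosDef) (hA_nonneg : ∀ i j, 0 ≤ A i j)
    (β : Fin K → Fin V → ℝ) (hβ : ∀ k j, 0 < β k j)
    (d : Fin V → ℝ) (hd : ∀ j, 0 ≤ d j) :
    ConcaveOn ℝ {θ : Fin K → ℝ | θ ∈ stdSimplex ℝ (Fin K) ∧ ∀ k, 0 < θ k}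
      (fun θ => (∑ j, d j * Real.log (∑ k, θ k * β k j)) -
        (1 / 2) * ((fun i => Real.log (θ i)) ⬝ᵥ A.mulVec fun i => Real.log (θ i))) := by
  set S : Set (Fin K → ℝ) := {θ : Fin K → ℝ | θ ∈ stdSimplex ℝ (Fin K) ∧ ∀ k, 0 < θ k}
  -- convexity of S
  have hS : Convex ℝ S := by
    have h1 : Convex ℝ {θ : Fin K → ℝ | ∀ k, 0 < θ k} := by
      have : {θ : Fin K → ℝ | ∀ k, 0 < θ k} = ⋂ k, (LinearMap.proj k : (Fin K → ℝ) →ₗ[ℝ] ℝ) ⁻¹' Set.Ioi 0 := by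
        ext θ; simp [LinearMap.proj]
      rw [this]
      exact convex_iInter fun k => (convex_Ioi (0:ℝ)).linear_preimage _
    exact (convex_stdSimplex ℝ (Fin K)).inter h1
  -- bounds on members
  have hmem : ∀ θ ∈ S, ∀ k, 0 < θ k ∧ θ k ≤ 1 := by
    intro θ hθ k
    refine ⟨hθ.2 k, ?_⟩
    calc θ k ≤ ∑ i, θ i := Finset.single_le_sum (fun i _ => hθ.1.1 i) (Finset.mem_univ k)
    _ = 1 := hθ.1.2
  have hlog_nonpos : ∀ θ ∈ S, ∀ k, Real.log (θ k) ≤ 0 := fun θ hθ k =>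
    Real.log_nonpos (le_of_lt (hmem θ hθ k).1) (hmem θ hθ k).2
  -- first term concave
  have hf1 : ConcaveOn ℝ S (fun θ => ∑ j, d j * Real.log (∑ k, θ k * β k j)) := by
    refine concaveOn_finset_sum hS Finset.univ _ (fun j _ => ?_)
    set g : (Fin K → ℝ) →ₗ[ℝ] ℝ := ∑ k, (β k j) • (LinearMap.proj k) with hgdef
    have hgfun : ⇑g = fun θ : Fin K → ℝ => ∑ k, θ k * β k j := by
      funext θ
      simp [hgdef, LinearMap.sum_apply, LinearMap.smul_apply, LinearMap.proj_apply,
        smul_eq_mul, mul_comm]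
    have hlin := (strictConcaveOn_log_Ioi.concaveOn).comp_linearMap g
    rw [hgfun] at hlin
    have hsub : S ⊆ (fun θ : Fin K → ℝ => ∑ k, θ k * β k j) ⁻¹' Set.Ioi 0 := by
      intro θ hθ
      simp only [Set.mem_preimage, Set.mem_Ioi]
      have hK : 0 < K := by
        by_contra h
        have : K = 0 := by omega
        subst this
        have := hθ.1.2
        simp at this
      refine Finset.sum_pos (fun k _ => mul_pos (hθ.2 k) (hβ k j)) ⟨⟨0, hK⟩, Finset.mem_univ _⟩
    exact (hlin.subset hsub hS).smul (hd j)
  -- second term convex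
  have hq : ConvexOn ℝ S
      (fun θ => (fun i => Real.log (θ i)) ⬝ᵥ A.mulVec fun i => Real.log (θ i)) := by
    refine ⟨hS, ?_⟩
    intro x hx y hy a b ha hb hab
    set u : Fin K → ℝ := fun i => Real.log ((a • x + b • y) i) with hu
    set zx : Fin K → ℝ := fun i => Real.log (x i) with hzx
    set zy : Fin K → ℝ := fun i => Real.log (y i) with hzy
    have hmemS : a • x + b • y ∈ S := hS hx hy ha hb hab
    have hz_le_u : ∀ i, (a • zx + b • zy) i ≤ u i := by
      intro i
      have := (strictConcaveOn_log_Ioi.concaveOn).2 (Set.mem_Ioi.2 (hx.2 i))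
        (Set.mem_Ioi.2 (hy.2 i)) ha hb hab
      simpa [hu, hzx, hzy, smul_eq_mul] using this
    have hu0 : ∀ i, u i ≤ 0 := fun i => hlog_nonpos _ hmemS i
    have step1 : u ⬝ᵥ A.mulVec u ≤ (a • zx + b • zy) ⬝ᵥ A.mulVec (a • zx + b • zy) :=
      quad_mono A hA_nonneg _ u hz_le_u hu0
    have step2 : (a • zx + b • zy) ⬝ᵥ A.mulVec (a • zx + b • zy)
        ≤ a * (zx ⬝ᵥ A.mulVec zx) + b * (zy ⬝ᵥ A.mulVec zy) :=
      quad_convex A hA_pd zx zy ha hb hab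
    simpa [smul_eq_mul, hu, hzx, hzy] using step1.trans step2
  have hf2 : ConvexOn ℝ S
      (fun θ => (1 / 2) * ((fun i => Real.log (θ i)) ⬝ᵥ A.mulVec fun i => Real.log (θ i))) := by
    have := hq.smul (by norm_num : (0:ℝ) ≤ 1/2)
    simpa [Pi.smul_apply, smul_eq_mul] using this
  exact hf1.sub hf2
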